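/- arXiv:1207.1836 — 4 statements merged into one kernel-verified Lean document; each statement's English description precedes it below -/
import Mathlib

section
/- Let α > 2, β > 0 and N > 0 be real numbers, let R_T = (Nβ)^{-1/α} and R_B = R_T/6. Let S be a finite set of points in the Euclidean plane ℝ² (the simultaneously transmitting nodes) and let x ∈ S. If the LowPower event occurs at x, i.e. ∑_{z ∈ S \ {x}} d(z,x)^{-α} ≤ (4(β+4)R_B)^{-α}, then every point y ∈ ℝ² \ S with 0 < d(x,y) ≤ 2R_B successfully receives the transmission from x, i.e. d(x,y)^{-α} / (N + ∑_{z ∈ S \ {x}} d(z,y)^{-α}) ≥ β. -/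
open Real
open scoped Classical

/-- If the LowPower event occurs at a transmitter `x`, then every
non-transmitting point `y` within distance `2 * R_B` of `x` receives the
transmission from `x`, i.e. the SINR condition holds at `y`. -/
theorem stmt_0 (α β N : ℝ) (hα : 2 < α) (hβ : 0 < β) (hN : 0 < N)
    (R_T R_B : ℝ) (hRT : R_T = (N * β) ^ (-1 / α)) (hRB : R_B = R_T / 6)
    (S : Finset (EuclideanSpace ℝ (Fin 2))) (x : EuclideanSpace ℝ (Fin 2)) (hx : x ∈ S)
    (hlow : ∑ z ∈ S.erase x, dist z x ^ (-α) ≤ (4 * (β + 4) * R_B) ^ (-α))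
    (y : EuclideanSpace ℝ (Fin 2)) (hy : y ∉ S)
    (hd0 : 0 < dist x y) (hd : dist x y ≤ 2 * R_B) :
    dist x y ^ (-α) / (N + ∑ z ∈ S.erase x, dist z y ^ (-α)) ≥ β := by
  have hα0 : (0 : ℝ) < α := by linarith
  have hRT0 : 0 < R_T := by rw [hRT]; positivity
  have hRB0 : 0 < R_B := by rw [hRB]; positivity
  have hnegα : -α < 0 := by linarith
  set d := dist x y with hdd
  -- interference term bound at each z
  have hzy : ∀ z ∈ S.erase x, dist z y ^ (-α) ≤ 2 ^ α * dist z x ^ (-α) := by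
    intro z hz
    have hzne : z ≠ x := Finset.ne_of_mem_erase hz
    have hzx0 : 0 < dist z x := dist_pos.mpr hzne
    have h4pos : (0 : ℝ) < 4 * (β + 4) * R_B := by positivity
    have hterm : dist z x ^ (-α) ≤ (4 * (β + 4) * R_B) ^ (-α) := by
      refine le_trans ?_ hlow
      exact Finset.single_le_sum (f := fun z => dist z x ^ (-α)) (fun i _ => Real.rpow_nonneg dist_nonneg _) hz
    have hfar : 4 * (β + 4) * R_B ≤ dist z x :=
      (Real.rpow_le_rpow_iff_of_neg hzx0 h4pos hnegα).mp hterm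
    have htri : dist z x ≤ dist z y + d := by
      have := dist_triangle z y x
      rw [dist_comm y x] at this
      linarith
    have hhalf : dist z x / 2 ≤ dist z y := by nlinarith
    have hzy0 : 0 < dist z y := lt_of_lt_of_le (by positivity) hhalf
    have h1 : dist z y ^ (-α) ≤ (dist z x / 2) ^ (-α) :=
      (Real.rpow_le_rpow_iff_of_neg hzy0 (by positivity) hnegα).mpr hhalf
    have h2 : (dist z x / 2) ^ (-α) = 2 ^ α * dist z x ^ (-α) := by
      rw [Real.div_rpow dist_nonneg (by norm_num), Real.rpow_neg (by norm_num : (0:ℝ) ≤ 2)]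
      field_simp
    rw [h2] at h1
    exact h1
  have hIy : ∑ z ∈ S.erase x, dist z y ^ (-α) ≤ (2 * (β + 4) * R_B) ^ (-α) := by
    calc ∑ z ∈ S.erase x, dist z y ^ (-α)
        ≤ ∑ z ∈ S.erase x, 2 ^ α * dist z x ^ (-α) := Finset.sum_le_sum hzy
      _ = 2 ^ α * ∑ z ∈ S.erase x, dist z x ^ (-α) := by rw [Finset.mul_sum]
      _ ≤ 2 ^ α * (4 * (β + 4) * R_B) ^ (-α) := by
          apply mul_le_mul_of_nonneg_left hlow (Real.rpow_nonneg (by norm_num) _)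
      _ = (2 * (β + 4) * R_B) ^ (-α) := by
          have : (4 * (β + 4) * R_B : ℝ) = 2 * (2 * (β + 4) * R_B) := by ring
          rw [this, Real.mul_rpow (by norm_num) (by positivity), ← mul_assoc,
            ← Real.rpow_add (by norm_num : (0:ℝ) < 2)]
          simp
  have hIy0 : (0 : ℝ) ≤ ∑ z ∈ S.erase x, dist z y ^ (-α) :=
    Finset.sum_nonneg fun i _ => Real.rpow_nonneg dist_nonneg _
  have hNβ : β * N = (6 * R_B) ^ (-α) := by
    have h6 : (6 : ℝ) * R_B = R_T := by rw [hRB]; ring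
    rw [h6, hRT]
    rw [← Real.rpow_mul (by positivity : (0:ℝ) ≤ N * β)]
    rw [show (-1 / α) * (-α) = 1 by field_simp, Real.rpow_one]
    ring
  -- key numerical inequality
  have hkey : (6 * R_B) ^ (-α) + β * (2 * (β + 4) * R_B) ^ (-α) ≤ (2 * R_B) ^ (-α) := by
    have h2RB : (0 : ℝ) < (2 * R_B) ^ (-α) := Real.rpow_pos_of_pos (by positivity) _
    have e1 : (6 * R_B : ℝ) ^ (-α) = 3 ^ (-α) * (2 * R_B) ^ (-α) := by
      rw [show (6 * R_B : ℝ) = 3 * (2 * R_B) by ring,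
        Real.mul_rpow (by norm_num) (by positivity)]
    have e2 : (2 * (β + 4) * R_B : ℝ) ^ (-α) = (β + 4) ^ (-α) * (2 * R_B) ^ (-α) := by
      rw [show (2 * (β + 4) * R_B : ℝ) = (β + 4) * (2 * R_B) by ring,
        Real.mul_rpow (by positivity) (by positivity)]
    rw [e1, e2]
    have h3 : (3 : ℝ) ^ (-α) ≤ 1 / 9 := by
      calc (3 : ℝ) ^ (-α) ≤ 3 ^ (-2 : ℝ) :=
            Real.rpow_le_rpow_of_exponent_le (by norm_num) (by linarith)
        _ = 1 / 9 := by
            rw [show (-2 : ℝ) = ((-2 : ℤ) : ℝ) by norm_num, Real.rpow_intCast]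
            norm_num
    have hb : β * (β + 4) ^ (-α) ≤ 1 / 16 := by
      have hb1 : (β + 4 : ℝ) ^ (-α) ≤ (β + 4) ^ (-2 : ℝ) :=
        Real.rpow_le_rpow_of_exponent_le (by linarith) (by linarith)
      have hb2 : (β + 4 : ℝ) ^ (-2 : ℝ) = ((β + 4) ^ 2)⁻¹ := by
        rw [show (-2 : ℝ) = ((-2 : ℤ) : ℝ) by norm_num, Real.rpow_intCast]
        simp [zpow_ofNat]
      have hsq : (0 : ℝ) < (β + 4) ^ 2 := by positivity
      have : β * ((β + 4) ^ 2)⁻¹ ≤ 1 / 16 := by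
        rw [mul_inv_le_iff₀ hsq]
        nlinarith [sq_nonneg (β - 4)]
      calc β * (β + 4) ^ (-α) ≤ β * ((β + 4) ^ 2)⁻¹ := by
            rw [← hb2]; exact mul_le_mul_of_nonneg_left hb1 hβ.le
        _ ≤ 1 / 16 := this
    nlinarith [Real.rpow_nonneg (show (0:ℝ) ≤ β + 4 by linarith) (-α)]
  have hdpow : (2 * R_B) ^ (-α) ≤ d ^ (-α) :=
    (Real.rpow_le_rpow_iff_of_neg (by positivity) hd0 hnegα).mpr hd
  have hden : (0 : ℝ) < N + ∑ z ∈ S.erase x, dist z y ^ (-α) := by linarith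
  rw [ge_iff_le, le_div_iff₀ hden]
  calc β * (N + ∑ z ∈ S.erase x, dist z y ^ (-α))
      = β * N + β * ∑ z ∈ S.erase x, dist z y ^ (-α) := by ring
    _ ≤ (6 * R_B) ^ (-α) + β * (2 * (β + 4) * R_B) ^ (-α) := by
        rw [hNβ]
        have := mul_le_mul_of_nonneg_left hIy hβ.le
        linarith
    _ ≤ (2 * R_B) ^ (-α) := hkey
    _ ≤ d ^ (-α) := hdpow
end

section
/- There exists a universal constant C > 0 such that the following holds. Let α > 2, 0 < φ ≤ 1, R_B > 0 and R_T = R_B/φ. Let V ⊆ ℝ² be a finite set of points with weights p_v ∈ [0,1] such that for every point c ∈ ℝ², ∑_{v ∈ V, d(v,c) ≤ R_B} p_v ≤ 1/2. Then for every x ∈ ℝ², ∑_{v ∈ V, d(v,x) > R_T} p_v · d(v,x)^{-α} ≤ C · ((α-1)/(α-2)) · φ^{α-2} / R_B^{α}. -/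
open Real

private lemma coord_le_dist (v x : EuclideanSpace ℝ (Fin 2)) (i : Fin 2) :
    |v i - x i| ≤ dist v x := by
  rw [EuclideanSpace.dist_eq, ← Real.sqrt_sq (abs_nonneg (v i - x i))]
  apply Real.sqrt_le_sqrt
  rw [sq_abs]
  calc (v i - x i)^2 = dist (v i) (x i) ^ 2 := by rw [Real.dist_eq, sq_abs]
    _ ≤ _ := Finset.single_le_sum (f := fun j => dist (v j) (x j)^2)
        (fun j _ => sq_nonneg _) (Finset.mem_univ i)

private lemma dist_le_of_coords (v c : EuclideanSpace ℝ (Fin 2)) (R : ℝ) (hR : 0 ≤ R)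
    (h0 : |v 0 - c 0| ≤ R / 2) (h1 : |v 1 - c 1| ≤ R / 2) : dist v c ≤ R := by
  rw [EuclideanSpace.dist_eq, ← Real.sqrt_sq hR]
  apply Real.sqrt_le_sqrt
  rw [Fin.sum_univ_two, Real.dist_eq, Real.dist_eq]
  nlinarith [abs_nonneg (v 0 - c 0), abs_nonneg (v 1 - c 1), sq_abs (v 0 - c 0), sq_abs (v 1 - c 1)]

private lemma floor_abs_bound (t R : ℝ) (hR : 0 < R) :
    R * ((max ⌊t/R⌋ (-(⌊t/R⌋+1)) : ℤ) : ℝ) ≤ |t| := by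
  set n := ⌊t/R⌋ with hn
  have h1 : (n:ℝ) * R ≤ t := by
    rw [← le_div_iff₀ hR]; exact Int.floor_le _
  have h2 : t < ((n:ℝ)+1) * R := by
    rw [← div_lt_iff₀ hR]; push_cast; exact Int.lt_floor_add_one _
  rcases le_or_gt 0 (n:ℤ) with h | h
  · have : (max n (-(n+1)) : ℤ) = n := max_eq_left (by omega)
    rw [this]
    have : 0 ≤ t := le_trans (by positivity) h1
    rw [abs_of_nonneg this]; nlinarith
  · have hmax : (max n (-(n+1)) : ℤ) = -(n+1) := max_eq_right (by omega)
    rw [hmax]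
    rcases le_total 0 (n+1 : ℤ) with h' | h'
    · have hn1 : (n:ℤ) + 1 = 0 := by omega
      have : ((-(n+1):ℤ):ℝ) = 0 := by exact_mod_cast congrArg Neg.neg hn1
      rw [this]; simpa using abs_nonneg t
    · have ht : t < 0 := by
        have : ((n:ℝ)+1) ≤ 0 := by exact_mod_cast (by exact_mod_cast h' : ((n+1:ℤ):ℝ) ≤ 0)
        nlinarith
      rw [abs_of_neg ht]; push_cast; nlinarith

private lemma floor_center_bound (t R : ℝ) (hR : 0 < R) :
    |t - ((⌊t/R⌋:ℝ) + 1/2) * R| ≤ R / 2 := by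
  have h1 : (⌊t/R⌋:ℝ) * R ≤ t := by
    rw [← le_div_iff₀ hR]; exact Int.floor_le _
  have h2 : t < ((⌊t/R⌋:ℝ)+1) * R := by
    rw [← div_lt_iff₀ hR]; push_cast; exact Int.lt_floor_add_one _
  rw [abs_le]; constructor <;> nlinarith

private lemma per_term (α a : ℝ) (hα : 2 < α) (ha : 1 ≤ a) :
    (α - 2) * (a+1) ^ (1-α) ≤ a ^ (2-α) - (a+1) ^ (2-α) := by
  have ha0 : (0:ℝ) < a := by linarith
  have hb0 : (0:ℝ) < a + 1 := by linarith
  have hβ : (0:ℝ) < α - 2 := by linarith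
  set s : ℝ := a / (a+1) with hs
  have hs0 : 0 < s := by positivity
  have hs1 : s < 1 := by rw [hs, div_lt_one hb0]; linarith
  have key : 1 + (α-2)*(1-s) ≤ s ^ (2-α) := by
    have h1 : Real.log s ≤ s - 1 := Real.log_le_sub_one_of_pos hs0
    have h2 : 1 + ((2-α) * Real.log s) ≤ Real.exp ((2-α) * Real.log s) :=
      by linarith [Real.add_one_le_exp ((2-α) * Real.log s)]
    have h3 : Real.exp ((2-α) * Real.log s) = s ^ (2-α) := by
      rw [Real.rpow_def_of_pos hs0, mul_comm]
    nlinarith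
  have hpow : s ^ (2-α) * (a+1) ^ (2-α) = a ^ (2-α) := by
    rw [hs, Real.div_rpow ha0.le hb0.le, div_mul_cancel₀]
    exact (Real.rpow_pos_of_pos hb0 _).ne'
  have h1s : 1 - s = 1 / (a+1) := by rw [hs]; field_simp; ring
  have hdiv : (a+1) ^ (2-α) / (a+1) = (a+1) ^ (1-α) := by
    rw [← Real.rpow_sub_one hb0.ne']; ring_nf
  have hbp : (0:ℝ) < (a+1) ^ (2-α) := Real.rpow_pos_of_pos hb0 _
  have := mul_le_mul_of_nonneg_right key hbp.le
  rw [hpow] at this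
  calc (α - 2) * (a+1) ^ (1-α) = (α-2) * ((a+1)^(2-α)/(a+1)) := by rw [hdiv]
    _ = (α-2)*(1-s) * (a+1)^(2-α) := by rw [h1s]; ring
    _ ≤ a ^ (2-α) - (a+1) ^ (2-α) := by nlinarith

private lemma tail_sum (α : ℝ) (hα : 2 < α) (K : ℕ) (hK : 1 ≤ K) (M : ℕ) :
    ∑ m ∈ Finset.Ioc K M, ((m:ℝ)) ^ (1-α) ≤ (K:ℝ) ^ (2-α) / (α-2) := by
  have hβ : (0:ℝ) < α - 2 := by linarith
  have main : ∀ M, K ≤ M → ∑ m ∈ Finset.Ioc K M, (α-2) * ((m:ℝ)) ^ (1-α) ≤ (K:ℝ)^(2-α) - (M:ℝ)^(2-α) := by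
    intro M hM
    induction M, hM using Nat.le_induction with
    | base => simp
    | succ M hKM ih =>
      rw [Finset.sum_Ioc_succ_top hKM]
      have hM1 : (1:ℝ) ≤ (M:ℝ) := by exact_mod_cast le_trans hK hKM
      have := per_term α (M:ℝ) hα hM1
      push_cast
      push_cast at ih
      linarith
  rcases le_or_gt K M with h | h
  · have h1 := main M h
    have hMpos : (0:ℝ) < (M:ℝ)^(2-α) :=
      Real.rpow_pos_of_pos (by exact_mod_cast Nat.lt_of_lt_of_le (by omega) h) _
    rw [le_div_iff₀ hβ, mul_comm, Finset.mul_sum]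
    exact h1.trans (by linarith)
  · rw [Finset.Ioc_eq_empty (by omega)]
    simp
    positivity

private lemma cell_card (m : ℕ) :
    ((Finset.Icc (-(m:ℤ)-1) m ×ˢ Finset.Icc (-(m:ℤ)-1) m) \
      (Finset.Icc (-(m:ℤ)) ((m:ℤ)-1) ×ˢ Finset.Icc (-(m:ℤ)) ((m:ℤ)-1))).card = 8*m+4 := by
  have hsub : (Finset.Icc (-(m:ℤ)) ((m:ℤ)-1) ×ˢ Finset.Icc (-(m:ℤ)) ((m:ℤ)-1)) ⊆
      (Finset.Icc (-(m:ℤ)-1) m ×ˢ Finset.Icc (-(m:ℤ)-1) m) :=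
    Finset.product_subset_product (Finset.Icc_subset_Icc (by omega) (by omega))
      (Finset.Icc_subset_Icc (by omega) (by omega))
  rw [Finset.card_sdiff_of_subset hsub, Finset.card_product, Finset.card_product,
    Int.card_Icc, Int.card_Icc]
  have h1 : ((m:ℤ) + 1 - (-(m:ℤ)-1)).toNat = 2*m+2 := by omega
  have h2 : ((m:ℤ) - 1 + 1 - (-(m:ℤ))).toNat = 2*m := by omega
  rw [h1, h2]
  exact Nat.sub_eq_of_eq_add (by ring)

private lemma cell_mem (m : ℕ) (z : ℤ × ℤ)
    (hz : (max (max z.1 (-(z.1+1))) (max z.2 (-(z.2+1)))).toNat = m) :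
    z ∈ (Finset.Icc (-(m:ℤ)-1) m ×ˢ Finset.Icc (-(m:ℤ)-1) m) \
      (Finset.Icc (-(m:ℤ)) ((m:ℤ)-1) ×ˢ Finset.Icc (-(m:ℤ)) ((m:ℤ)-1)) := by
  set M := max (max z.1 (-(z.1+1))) (max z.2 (-(z.2+1))) with hM
  have h11 : z.1 ≤ M := le_trans (le_max_left _ _) (le_max_left _ _)
  have h12 : -(z.1+1) ≤ M := le_trans (le_max_right _ _) (le_max_left _ _)
  have h21 : z.2 ≤ M := le_trans (le_max_left _ _) (le_max_right _ _)
  have h22 : -(z.2+1) ≤ M := le_trans (le_max_right _ _) (le_max_right _ _)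
  have hch : M = z.1 ∨ M = -(z.1+1) ∨ M = z.2 ∨ M = -(z.2+1) := by
    rcases max_choice (max z.1 (-(z.1+1))) (max z.2 (-(z.2+1))) with h | h <;>
      rw [hM, h] <;> [rcases max_choice z.1 (-(z.1+1)) with h' | h';
        rcases max_choice z.2 (-(z.2+1)) with h' | h'] <;> rw [h'] <;> tauto
  simp only [Finset.mem_sdiff, Finset.mem_product, Finset.mem_Icc, not_and_or, not_le]
  omega

/-- There is a universal constant `C > 0` such that whenever the
total transmission probability in every broadcast region (ball of radius `R_B`)
is at most `1/2`, the expected interference at any point `x` coming from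
transmitters at distance more than `R_T = R_B/φ` is at most
`C·((α-1)/(α-2))·φ^(α-2)/R_B^α`. -/
theorem stmt_4 :
    ∃ C : ℝ, 0 < C ∧
      ∀ (α φ R_B : ℝ), 2 < α → 0 < φ → φ ≤ 1 → 0 < R_B →
      ∀ (V : Finset (EuclideanSpace ℝ (Fin 2))) (p : EuclideanSpace ℝ (Fin 2) → ℝ),
        (∀ v ∈ V, 0 ≤ p v ∧ p v ≤ 1) →
        (∀ c : EuclideanSpace ℝ (Fin 2),
          ∑ v ∈ V.filter (fun v => dist v c ≤ R_B), p v ≤ 1 / 2) →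
        ∀ x : EuclideanSpace ℝ (Fin 2),
          ∑ v ∈ V.filter (fun v => R_B / φ < dist v x), p v * dist v x ^ (-α) ≤
            C * ((α - 1) / (α - 2)) * φ ^ (α - 2) / R_B ^ α := by
  classical
  refine ⟨100, by norm_num, ?_⟩
  intro α φ R_B hα hφ hφ1 hRB V p hp hball x
  have hβ : (0:ℝ) < α - 2 := by linarith
  have hRT : (0:ℝ) < R_B / φ := by positivity
  set S : Finset (EuclideanSpace ℝ (Fin 2)) := V.filter (fun v => R_B / φ < dist v x) with hSdef
  set f : EuclideanSpace ℝ (Fin 2) → ℤ × ℤ :=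
    fun v => (⌊(v 0 - x 0) / R_B⌋, ⌊(v 1 - x 1) / R_B⌋) with hfdef
  set μ : ℤ × ℤ → ℕ :=
    fun z => (max (max z.1 (-(z.1+1))) (max z.2 (-(z.2+1)))).toNat with hμdef
  set h : ℕ → ℝ := fun m => (max (R_B * m) (R_B / φ)) ^ (-α) with hhdef
  have hmaxpos : ∀ m : ℕ, (0:ℝ) < max (R_B * m) (R_B / φ) :=
    fun m => lt_of_lt_of_le hRT (le_max_right _ _)
  have hhnn : ∀ m, 0 ≤ h m := fun m => Real.rpow_nonneg (hmaxpos m).le _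
  have hpnn : ∀ v ∈ S, 0 ≤ p v := by
    intro v hv
    rw [hSdef, Finset.mem_filter] at hv
    exact (hp v hv.1).1
  -- (a) distance lower bound
  have hdist : ∀ v ∈ S, max (R_B * (μ (f v) : ℝ)) (R_B / φ) ≤ dist v x := by
    intro v hv
    rw [hSdef, Finset.mem_filter] at hv
    apply max_le _ hv.2.le
    have key : ∀ i : Fin 2,
        R_B * ((max ⌊(v i - x i)/R_B⌋ (-(⌊(v i - x i)/R_B⌋+1)) : ℤ):ℝ) ≤ dist v x :=
      fun i => le_trans (floor_abs_bound _ _ hRB) (coord_le_dist v x i)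
    have e1 : (f v).1 = ⌊(v 0 - x 0)/R_B⌋ := rfl
    have e2 : (f v).2 = ⌊(v 1 - x 1)/R_B⌋ := rfl
    set M : ℤ := max (max (f v).1 (-((f v).1+1))) (max (f v).2 (-((f v).2+1))) with hMdef
    have h11 : (f v).1 ≤ M := le_trans (le_max_left _ _) (le_max_left _ _)
    have h12 : -((f v).1+1) ≤ M := le_trans (le_max_right _ _) (le_max_left _ _)
    have hM0 : (0:ℤ) ≤ M := by omega
    have hcast : ((μ (f v) : ℤ) : ℝ) = (M:ℝ) := by
      rw [hμdef]
      simp only []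
      rw [Int.toNat_of_nonneg hM0]
    have hμcast : ((μ (f v)) : ℝ) = (M:ℝ) := by exact_mod_cast hcast
    rw [hμcast]
    rcases max_choice (max (f v).1 (-((f v).1+1))) (max (f v).2 (-((f v).2+1))) with hc | hc
    · rw [hMdef, hc, e1]; exact key 0
    · rw [hMdef, hc, e2]; exact key 1
  -- (b) fiber mass
  have hmass : ∀ z : ℤ × ℤ, ∑ v ∈ S.filter (fun v => f v = z), p v ≤ 1/2 := by
    intro z
    set c : EuclideanSpace ℝ (Fin 2) :=
      WithLp.toLp 2 (fun i => x i + (((![z.1, z.2] i : ℤ) : ℝ) + 1/2) * R_B) with hcdef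
    refine le_trans (Finset.sum_le_sum_of_subset_of_nonneg ?_ ?_) (hball c)
    · intro v hv
      rw [Finset.mem_filter] at hv
      obtain ⟨hvS, hvf⟩ := hv
      rw [hSdef, Finset.mem_filter] at hvS
      rw [Finset.mem_filter]
      refine ⟨hvS.1, ?_⟩
      have e1 : z.1 = ⌊(v 0 - x 0)/R_B⌋ := by rw [← hvf]
      have e2 : z.2 = ⌊(v 1 - x 1)/R_B⌋ := by rw [← hvf]
      apply dist_le_of_coords v c R_B hRB.le
      · have hc0 : c 0 = x 0 + ((z.1 : ℝ) + 1/2) * R_B := by rw [hcdef]; norm_num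
        rw [hc0, e1]
        have := floor_center_bound (v 0 - x 0) R_B hRB
        convert this using 2
        ring
      · have hc1 : c 1 = x 1 + ((z.2 : ℝ) + 1/2) * R_B := by rw [hcdef]; norm_num
        rw [hc1, e2]
        have := floor_center_bound (v 1 - x 1) R_B hRB
        convert this using 2
        ring
    · intro v hv _
      rw [Finset.mem_filter] at hv
      exact (hp v hv.1).1
  -- main chain
  set T : Finset (ℤ × ℤ) := S.image f with hTdef
  have step1 : ∑ v ∈ S, p v * dist v x ^ (-α) ≤ (1/2) * ∑ z ∈ T, h (μ z) := by
    rw [← Finset.sum_fiberwise_of_maps_to (fun v hv => Finset.mem_image_of_mem f hv)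
      (fun v => p v * dist v x ^ (-α)), Finset.mul_sum]
    apply Finset.sum_le_sum
    intro z hz
    calc ∑ v ∈ S.filter (fun v => f v = z), p v * dist v x ^ (-α)
        ≤ ∑ v ∈ S.filter (fun v => f v = z), p v * h (μ z) := by
          apply Finset.sum_le_sum
          intro v hv
          rw [Finset.mem_filter] at hv
          have hd := hdist v hv.1
          rw [hv.2] at hd
          refine mul_le_mul_of_nonneg_left ?_ (hpnn v hv.1)
          exact Real.rpow_le_rpow_of_nonpos (hmaxpos (μ z)) hd (neg_nonpos.2 (by linarith))
      _ = (∑ v ∈ S.filter (fun v => f v = z), p v) * h (μ z) := by rw [Finset.sum_mul]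
      _ ≤ (1/2) * h (μ z) := mul_le_mul_of_nonneg_right (hmass z) (hhnn _)
  -- regroup over μ values
  set K : ℕ := ⌈1/φ⌉₊ with hKdef
  have hK1 : 1 ≤ K := Nat.one_le_ceil_iff.mpr (by positivity)
  have hKlow : 1/φ ≤ (K:ℝ) := Nat.le_ceil _
  have hφinv : (1:ℝ) ≤ 1/φ := by
    rw [le_div_iff₀ hφ]; linarith
  have hKup : (K:ℝ) ≤ 2/φ := by
    have := Nat.ceil_lt_add_one (by positivity : (0:ℝ) ≤ 1/φ)
    have h2 : (K:ℝ) < 1/φ + 1 := this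
    have : 1/φ + 1 ≤ 2/φ := by
      have : (2:ℝ)/φ = 1/φ + 1/φ := by ring
      linarith
    linarith
  set N : ℕ := (T.image μ).sup id with hNdef
  have step2 : ∑ z ∈ T, h (μ z) ≤ ∑ m ∈ Finset.range (N+1), (8*(m:ℝ)+4) * h m := by
    rw [← Finset.sum_fiberwise_of_maps_to (fun z hz => Finset.mem_image_of_mem μ hz)
      (fun z => h (μ z))]
    have inner : ∀ m ∈ T.image μ,
        ∑ z ∈ T.filter (fun z => μ z = m), h (μ z) ≤ (8*(m:ℝ)+4) * h m := by
      intro m hm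
      have hcongr : ∑ z ∈ T.filter (fun z => μ z = m), h (μ z)
          = ((T.filter (fun z => μ z = m)).card : ℝ) * h m := by
        rw [Finset.sum_congr rfl (fun z hz => by rw [(Finset.mem_filter.mp hz).2]),
          Finset.sum_const, nsmul_eq_mul]
      rw [hcongr]
      apply mul_le_mul_of_nonneg_right _ (hhnn m)
      have hcard : (T.filter (fun z => μ z = m)).card ≤ 8*m+4 := by
        rw [← cell_card m]
        apply Finset.card_le_card
        intro z hz
        exact cell_mem m z (Finset.mem_filter.mp hz).2
      calc ((T.filter (fun z => μ z = m)).card : ℝ) ≤ ((8*m+4 : ℕ) : ℝ) := by exact_mod_cast hcard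
        _ = 8*(m:ℝ)+4 := by push_cast; ring
    calc ∑ m ∈ T.image μ, ∑ z ∈ T.filter (fun z => μ z = m), h (μ z)
        ≤ ∑ m ∈ T.image μ, (8*(m:ℝ)+4) * h m := Finset.sum_le_sum inner
      _ ≤ ∑ m ∈ Finset.range (N+1), (8*(m:ℝ)+4) * h m := by
          apply Finset.sum_le_sum_of_subset_of_nonneg
          · intro m hm
            rw [Finset.mem_range, Nat.lt_succ_iff]
            exact Finset.le_sup (f := id) hm
          · intro m _ _
            have : (0:ℝ) ≤ 8*(m:ℝ)+4 := by positivity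
            exact mul_nonneg this (hhnn m)
  -- split the range sum
  have hsplit : ∑ m ∈ Finset.range (N+1), (8*(m:ℝ)+4) * h m
      = ∑ m ∈ (Finset.range (N+1)).filter (fun m => m ≤ K), (8*(m:ℝ)+4) * h m
      + ∑ m ∈ (Finset.range (N+1)).filter (fun m => ¬ m ≤ K), (8*(m:ℝ)+4) * h m :=
    (Finset.sum_filter_add_sum_filter_not _ _ _).symm
  -- part A
  have hRTpow : (R_B/φ) ^ (-α) = φ ^ α / R_B ^ α := by
    rw [Real.rpow_neg (by positivity), Real.div_rpow hRB.le hφ.le, inv_div]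
  have partA : ∑ m ∈ (Finset.range (N+1)).filter (fun m => m ≤ K), (8*(m:ℝ)+4) * h m
      ≤ ((K:ℝ)+1) * ((8*(K:ℝ)+4) * (φ ^ α / R_B ^ α)) := by
    have hterm : ∀ m ∈ (Finset.range (N+1)).filter (fun m => m ≤ K),
        (8*(m:ℝ)+4) * h m ≤ (8*(K:ℝ)+4) * (φ ^ α / R_B ^ α) := by
      intro m hm
      have hmK : m ≤ K := (Finset.mem_filter.mp hm).2
      have hmK' : (m:ℝ) ≤ (K:ℝ) := by exact_mod_cast hmK
      have hh1 : h m ≤ (R_B/φ) ^ (-α) :=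
        Real.rpow_le_rpow_of_nonpos hRT (le_max_right _ _) (neg_nonpos.2 (by linarith))
      rw [hRTpow] at hh1
      apply mul_le_mul (by linarith) hh1 (hhnn m) (by positivity)
    have hcard : ((Finset.range (N+1)).filter (fun m => m ≤ K)).card ≤ K+1 := by
      calc ((Finset.range (N+1)).filter (fun m => m ≤ K)).card
          ≤ (Finset.range (K+1)).card := by
            apply Finset.card_le_card
            intro m hm
            rw [Finset.mem_range, Nat.lt_succ_iff]
            exact (Finset.mem_filter.mp hm).2
        _ = K+1 := Finset.card_range _
    calc ∑ m ∈ (Finset.range (N+1)).filter (fun m => m ≤ K), (8*(m:ℝ)+4) * h m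
        ≤ ((Finset.range (N+1)).filter (fun m => m ≤ K)).card
            • ((8*(K:ℝ)+4) * (φ ^ α / R_B ^ α)) := Finset.sum_le_card_nsmul _ _ _ hterm
      _ = (((Finset.range (N+1)).filter (fun m => m ≤ K)).card : ℝ)
            * ((8*(K:ℝ)+4) * (φ ^ α / R_B ^ α)) := by rw [nsmul_eq_mul]
      _ ≤ ((K:ℝ)+1) * ((8*(K:ℝ)+4) * (φ ^ α / R_B ^ α)) := by
          apply mul_le_mul_of_nonneg_right _ (by positivity)
          exact_mod_cast hcard
  -- part B
  have partB : ∑ m ∈ (Finset.range (N+1)).filter (fun m => ¬ m ≤ K), (8*(m:ℝ)+4) * h m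
      ≤ 12 * R_B ^ (-α) * ((K:ℝ) ^ (2-α) / (α-2)) := by
    have hterm : ∀ m ∈ (Finset.range (N+1)).filter (fun m => ¬ m ≤ K),
        (8*(m:ℝ)+4) * h m ≤ 12 * R_B ^ (-α) * ((m:ℝ)) ^ (1-α) := by
      intro m hm
      have hmK : K < m := by
        have := (Finset.mem_filter.mp hm).2
        omega
      have hm1 : 1 ≤ m := by omega
      have hm0 : (0:ℝ) < (m:ℝ) := by exact_mod_cast Nat.lt_of_lt_of_le Nat.zero_lt_one hm1
      have hm1' : (1:ℝ) ≤ (m:ℝ) := by exact_mod_cast hm1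
      have hh1 : h m ≤ (R_B * (m:ℝ)) ^ (-α) := by
        apply Real.rpow_le_rpow_of_nonpos (by positivity) (le_max_left _ _)
          (neg_nonpos.2 (by linarith))
      have hmul : (R_B * (m:ℝ)) ^ (-α) = R_B ^ (-α) * ((m:ℝ)) ^ (-α) :=
        Real.mul_rpow hRB.le hm0.le
      have hpow : (m:ℝ) * ((m:ℝ)) ^ (-α) = ((m:ℝ)) ^ (1-α) := by
        rw [show (1:ℝ)-α = 1 + -α by ring, Real.rpow_add hm0, Real.rpow_one]
      calc (8*(m:ℝ)+4) * h m ≤ (12*(m:ℝ)) * (R_B ^ (-α) * ((m:ℝ)) ^ (-α)) := by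
            rw [← hmul]
            apply mul_le_mul (by linarith) hh1 (hhnn m) (by positivity)
        _ = 12 * R_B ^ (-α) * ((m:ℝ) * ((m:ℝ)) ^ (-α)) := by ring
        _ = 12 * R_B ^ (-α) * ((m:ℝ)) ^ (1-α) := by rw [hpow]
    calc ∑ m ∈ (Finset.range (N+1)).filter (fun m => ¬ m ≤ K), (8*(m:ℝ)+4) * h m
        ≤ ∑ m ∈ (Finset.range (N+1)).filter (fun m => ¬ m ≤ K),
            12 * R_B ^ (-α) * ((m:ℝ)) ^ (1-α) := Finset.sum_le_sum hterm
      _ ≤ ∑ m ∈ Finset.Ioc K N, 12 * R_B ^ (-α) * ((m:ℝ)) ^ (1-α) := by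
          apply Finset.sum_le_sum_of_subset_of_nonneg
          · intro m hm
            rw [Finset.mem_filter, Finset.mem_range, Nat.lt_succ_iff] at hm
            rw [Finset.mem_Ioc]
            omega
          · intro m _ _
            have : (0:ℝ) ≤ ((m:ℝ)) ^ (1-α) := Real.rpow_nonneg (Nat.cast_nonneg m) _
            positivity
      _ = 12 * R_B ^ (-α) * ∑ m ∈ Finset.Ioc K N, ((m:ℝ)) ^ (1-α) := by
          rw [Finset.mul_sum]
      _ ≤ 12 * R_B ^ (-α) * ((K:ℝ) ^ (2-α) / (α-2)) := by
          apply mul_le_mul_of_nonneg_left (tail_sum α hα K hK1 N)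
          have : (0:ℝ) ≤ R_B ^ (-α) := Real.rpow_nonneg hRB.le _
          positivity
  -- numeric assembly
  set X : ℝ := φ ^ (α-2) / R_B ^ α with hXdef
  have hXpos : 0 < X := by
    rw [hXdef]
    have := Real.rpow_pos_of_pos hφ (α-2)
    have := Real.rpow_pos_of_pos hRB α
    positivity
  have hphi2 : φ ^ (α-2) = φ ^ α / φ^(2:ℕ) := by
    rw [← Real.rpow_natCast φ 2, ← Real.rpow_sub hφ]
    norm_num
  have boundA : ((K:ℝ)+1) * ((8*(K:ℝ)+4) * (φ ^ α / R_B ^ α)) ≤ 60 * X := by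
    have hK0 : (0:ℝ) ≤ (K:ℝ) := Nat.cast_nonneg K
    have h1 : (K:ℝ)+1 ≤ 3/φ := by
      have : (1:ℝ) ≤ 1/φ := hφinv
      have h3 : (3:ℝ)/φ = 2/φ + 1/φ := by ring
      linarith
    have h2 : 8*(K:ℝ)+4 ≤ 20/φ := by
      have : (8:ℝ)*(K:ℝ) ≤ 16/φ := by
        have h16 : (16:ℝ)/φ = 8*(2/φ) := by ring
        linarith [hKup]
      have h4 : (4:ℝ) ≤ 4/φ := by
        have := hφinv
        calc (4:ℝ) = 4*1 := by ring
          _ ≤ 4*(1/φ) := by linarith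
          _ = 4/φ := by ring
      have h20 : (20:ℝ)/φ = 16/φ + 4/φ := by ring
      linarith
    have hφα : (0:ℝ) < φ ^ α := Real.rpow_pos_of_pos hφ α
    have hRα : (0:ℝ) < R_B ^ α := Real.rpow_pos_of_pos hRB α
    have hXeq : X = φ ^ α / (φ^(2:ℕ) * R_B ^ α) := by
      rw [hXdef, hphi2]; field_simp
    calc ((K:ℝ)+1) * ((8*(K:ℝ)+4) * (φ ^ α / R_B ^ α))
        ≤ (3/φ) * ((20/φ) * (φ ^ α / R_B ^ α)) := by
          apply mul_le_mul h1 (mul_le_mul h2 le_rfl (by positivity) (by positivity))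
            (by positivity) (by positivity)
      _ = 60 * (φ ^ α / (φ^(2:ℕ) * R_B ^ α)) := by
          field_simp
          ring
      _ = 60 * X := by rw [hXeq]
  have boundB : 12 * R_B ^ (-α) * ((K:ℝ) ^ (2-α) / (α-2)) ≤ (12/(α-2)) * X := by
    have hKpow : (K:ℝ) ^ (2-α) ≤ φ ^ (α-2) := by
      have h1 : (K:ℝ) ^ (2-α) ≤ (1/φ) ^ (2-α) :=
        Real.rpow_le_rpow_of_nonpos (by positivity) hKlow (by linarith)
      have h2 : (1/φ) ^ (2-α) = φ ^ (α-2) := by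
        rw [one_div, ← Real.rpow_neg_one φ, ← Real.rpow_mul hφ.le]
        norm_num
      rw [← h2]
      exact h1
    have hRneg : R_B ^ (-α) = (R_B ^ α)⁻¹ := Real.rpow_neg hRB.le α
    have hRα : (0:ℝ) < R_B ^ α := Real.rpow_pos_of_pos hRB α
    rw [hRneg, hXdef]
    rw [div_eq_mul_inv (φ ^ (α-2)) (R_B ^ α)]
    have : 12 * (R_B ^ α)⁻¹ * ((K:ℝ) ^ (2-α) / (α-2)) ≤ 12 * (R_B ^ α)⁻¹ * (φ^(α-2)/(α-2)) := by
      gcongr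
    calc 12 * (R_B ^ α)⁻¹ * ((K:ℝ) ^ (2-α) / (α-2)) ≤ 12 * (R_B ^ α)⁻¹ * (φ^(α-2)/(α-2)) := this
      _ = (12/(α-2)) * (φ ^ (α-2) * (R_B ^ α)⁻¹) := by ring
  -- combine everything
  have total : ∑ v ∈ S, p v * dist v x ^ (-α) ≤ (1/2) * (60 * X + (12/(α-2)) * X) := by
    calc ∑ v ∈ S, p v * dist v x ^ (-α) ≤ (1/2) * ∑ z ∈ T, h (μ z) := step1
      _ ≤ (1/2) * ∑ m ∈ Finset.range (N+1), (8*(m:ℝ)+4) * h m := by linarith [step2]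
      _ = (1/2) * (∑ m ∈ (Finset.range (N+1)).filter (fun m => m ≤ K), (8*(m:ℝ)+4) * h m
          + ∑ m ∈ (Finset.range (N+1)).filter (fun m => ¬ m ≤ K), (8*(m:ℝ)+4) * h m) := by
            rw [← hsplit]
      _ ≤ (1/2) * (60 * X + (12/(α-2)) * X) := by
          have := partA.trans boundA
          have := partB.trans boundB
          linarith
  have final : (1/2) * (60 * X + (12/(α-2)) * X) ≤ 100 * ((α-1)/(α-2)) * X := by
    have hr1 : (α-2) * ((α-1)/(α-2)) = α-1 := by field_simp
    have hr2 : (α-2) * (12/(α-2)) = 12 := by field_simp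
    nlinarith [hXpos, hβ]
  have goal_eq : 100 * ((α - 1) / (α - 2)) * φ ^ (α - 2) / R_B ^ α
      = 100 * ((α-1)/(α-2)) * X := by
    rw [hXdef]; ring
  rw [goal_eq]
  exact total.trans final
end

section
/- Let n ≥ 1, and let i < j be natural numbers. Let Δ be a natural number with Δ ≤ n²/(4·16^j) and let p ∈ [0,1] satisfy p ≤ 16^{i+1}/n². If X is a binomially distributed random variable with parameters Δ and p (the number of successes among Δ independent Bernoulli(p) trials), then ℙ(X ≥ 1) ≤ (2/e)^{j-i+1}. -/
open Real

lemma aux_key (k : ℕ) (hk : 1 ≤ k) : 4 / (16:ℝ)^k ≤ (2 / Real.exp 1)^(k+1) := by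
  have he : Real.exp 1 ≤ 2.7182818286 := (Real.exp_one_lt_d9).le
  have hep : 0 < Real.exp 1 := Real.exp_pos 1
  induction k with
  | zero => omega
  | succ m ih =>
    rcases Nat.eq_zero_or_pos m with hm | hm
    · subst hm
      rw [pow_one, pow_two, div_mul_div_comm]
      rw [div_le_div_iff₀ (by norm_num) (by positivity)]
      nlinarith
    · have h1 := ih hm
      have h2 : (1:ℝ)/16 ≤ 2 / Real.exp 1 := by
        rw [div_le_div_iff₀ (by norm_num) hep]; nlinarith
      calc 4 / (16:ℝ)^(m+1) = (4 / 16^m) * (1/16) := by ring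
        _ ≤ (2 / Real.exp 1)^(m+1) * (2 / Real.exp 1) := by
            apply mul_le_mul h1 h2 (by norm_num) (by positivity)
        _ = (2 / Real.exp 1)^(m+1+1) := by ring

/-- Let `n ≥ 1`, `i < j`, `Δ ≤ n²/(4·16^j)` and
`p ≤ 16^(i+1)/n²`. If `X ~ Binomial(Δ, p)`, then
`ℙ(X ≥ 1) ≤ (2/e)^(j-i+1)`. -/
theorem stmt_10 (n i j Δ : ℕ) (hn : 1 ≤ n) (hij : i < j)
    (hΔ : (Δ : ℝ) ≤ (n : ℝ) ^ 2 / (4 * 16 ^ j))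
    (p : ℝ) (hp0 : 0 ≤ p) (hp1 : p ≤ 1)
    (hp : p ≤ 16 ^ (i + 1) / (n : ℝ) ^ 2) :
    (PMF.binomial (Real.toNNReal p) (Real.toNNReal_le_one.mpr hp1) Δ).toMeasure
        {k | 1 ≤ (k : ℕ)}
      ≤ ENNReal.ofReal ((2 / Real.exp 1) ^ (j - i + 1)) := by
  set μ := (PMF.binomial (Real.toNNReal p) (Real.toNNReal_le_one.mpr hp1) Δ).toMeasure with hμ
  have hset : {k : Fin (Δ+1) | 1 ≤ (k : ℕ)} = ({0} : Set (Fin (Δ+1)))ᶜ := by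
    ext k
    simp only [Set.mem_setOf_eq, Set.mem_compl_iff, Set.mem_singleton_iff, Fin.ext_iff, Fin.val_zero]
    omega
  rw [hset, MeasureTheory.prob_compl_eq_one_sub (measurableSet_singleton _)]
  have h0 : μ {0} = ((1 : ENNReal) - ENNReal.ofReal p) ^ Δ := by
    rw [hμ, PMF.toMeasure_apply_singleton _ _ (measurableSet_singleton _),
      PMF.binomial_apply]
    simp
    rfl
  rw [h0]
  have h1 : ((1 : ENNReal) - ENNReal.ofReal p) = ENNReal.ofReal (1 - p) := by
    rw [ENNReal.ofReal_sub 1 hp0, ENNReal.ofReal_one]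
  have h1p : 0 ≤ 1 - p := by linarith
  rw [h1, ← ENNReal.ofReal_pow h1p, ← ENNReal.ofReal_one,
    ← ENNReal.ofReal_sub 1 (by positivity)]
  apply ENNReal.ofReal_le_ofReal
  -- real inequality
  have hber : 1 - (1-p)^Δ ≤ Δ * p := by
    have := one_add_mul_le_pow (a := -p) (by linarith) Δ
    have h : (1 + (Δ:ℝ) * (-p)) ≤ (1 - p)^Δ := by
      rw [sub_eq_add_neg]; exact this
    nlinarith
  have hn2 : (0:ℝ) < (n:ℝ)^2 := by positivity
  have hΔ0 : (0:ℝ) ≤ (Δ:ℝ) := Nat.cast_nonneg _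
  have hmul : (Δ:ℝ) * p ≤ ((n:ℝ)^2 / (4 * 16^j)) * (16^(i+1) / (n:ℝ)^2) :=
    mul_le_mul hΔ hp hp0 (by positivity)
  have hk : j = i + (j - i) := by omega
  have heq : ((n:ℝ)^2 / (4 * 16^j)) * (16^(i+1) / (n:ℝ)^2) = 4 / 16^(j-i) := by
    rw [hk, pow_add, pow_succ]
    field_simp
    rw [Nat.add_sub_cancel_left]
    ring
  have hfin : 4 / (16:ℝ)^(j-i) ≤ (2 / Real.exp 1)^(j-i+1) := aux_key _ (by omega)
  linarith [heq ▸ hmul]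
end

section
/- Let m and r be natural numbers and let w_0, w_1, …, w_r be nonnegative reals with ∑_{i=0}^{r} w_i = 1. Then there exists a natural number j with 0 ≤ j ≤ m such that ∑_{i=0}^{r} (2/e)^{|i-j|+1} · w_i ≤ C/(m+1), where C = (2/e)·(e+2)/(e-2). -/
open Real

lemma geom_aux {q : ℝ} (hq0 : 0 ≤ q) (hq1 : q < 1) (n : ℕ) :
    ∑ d ∈ Finset.range n, q ^ d ≤ 1 / (1 - q) := by
  have h1 : 0 < 1 - q := by linarith
  rw [geom_sum_eq (by linarith : q ≠ 1)]
  have heq : (q ^ n - 1) / (q - 1) = (1 - q ^ n) / (1 - q) := by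
    rw [div_eq_div_iff (by linarith) (by linarith)]
    ring
  rw [heq]
  have hn : 0 ≤ q ^ n := pow_nonneg hq0 n
  gcongr
  linarith

lemma key_aux {q : ℝ} (hq0 : 0 ≤ q) (hq1 : q < 1) (m i : ℕ) :
    ∑ j ∈ Finset.range (m + 1), q ^ (((i : ℤ) - (j : ℤ)).natAbs + 1) ≤
      q * (1 + q) / (1 - q) := by
  have h1q : 0 < 1 - q := by linarith
  set S := Finset.range (m + 1)
  have hsplit : S = S.filter (· ≤ i) ∪ S.filter (fun j => ¬ j ≤ i) :=
    (Finset.filter_union_filter_not_eq _ S).symm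
  rw [hsplit, Finset.sum_union (Finset.disjoint_filter_filter_not S S _)]
  -- first part: j ≤ i, distance i - j
  have hpart1 : ∑ j ∈ S.filter (· ≤ i), q ^ (((i : ℤ) - (j : ℤ)).natAbs + 1)
      ≤ q * (1 / (1 - q)) := by
    have hre : ∀ j ∈ S.filter (· ≤ i),
        q ^ (((i : ℤ) - (j : ℤ)).natAbs + 1) = q ^ ((i - j) + 1) := by
      intro j hj
      simp only [Finset.mem_filter] at hj
      congr 2
      omega
    rw [Finset.sum_congr rfl hre]
    have hinj : ∀ a ∈ S.filter (· ≤ i), ∀ b ∈ S.filter (· ≤ i),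
        i - a = i - b → a = b := by
      intro a ha b hb hab
      simp only [Finset.mem_filter] at ha hb
      omega
    have himg : ∑ x ∈ S.filter (· ≤ i), q ^ ((i - x) + 1) =
        ∑ d ∈ (S.filter (· ≤ i)).image (fun j => i - j), q ^ (d + 1) :=
      (Finset.sum_image (f := fun d => q ^ (d + 1)) hinj).symm
    rw [himg]
    have hsub : (S.filter (· ≤ i)).image (fun j => i - j) ⊆ Finset.range (i + 1) := by
      intro d hd
      simp only [Finset.mem_image, Finset.mem_filter] at hd
      obtain ⟨j, hj, rfl⟩ := hd
      simp only [Finset.mem_range]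
      omega
    calc ∑ d ∈ (S.filter (· ≤ i)).image (fun j => i - j), q ^ (d + 1)
        ≤ ∑ d ∈ Finset.range (i + 1), q ^ (d + 1) := by
          apply Finset.sum_le_sum_of_subset_of_nonneg hsub
          intro d _ _
          exact pow_nonneg hq0 _
      _ = q * ∑ d ∈ Finset.range (i + 1), q ^ d := by
          rw [Finset.mul_sum]
          apply Finset.sum_congr rfl
          intro d _
          ring
      _ ≤ q * (1 / (1 - q)) := by
          apply mul_le_mul_of_nonneg_left (geom_aux hq0 hq1 _) hq0
  -- second part: j > i, distance j - i ≥ 1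
  have hpart2 : ∑ j ∈ S.filter (fun j => ¬ j ≤ i), q ^ (((i : ℤ) - (j : ℤ)).natAbs + 1)
      ≤ q * q * (1 / (1 - q)) := by
    have hre : ∀ j ∈ S.filter (fun j => ¬ j ≤ i),
        q ^ (((i : ℤ) - (j : ℤ)).natAbs + 1) = q ^ ((j - i - 1) + 2) := by
      intro j hj
      simp only [Finset.mem_filter] at hj
      congr 1
      omega
    rw [Finset.sum_congr rfl hre]
    have hinj : ∀ a ∈ S.filter (fun j => ¬ j ≤ i), ∀ b ∈ S.filter (fun j => ¬ j ≤ i),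
        a - i - 1 = b - i - 1 → a = b := by
      intro a ha b hb hab
      simp only [Finset.mem_filter] at ha hb
      omega
    have himg : ∑ x ∈ S.filter (fun j => ¬ j ≤ i), q ^ ((x - i - 1) + 2) =
        ∑ d ∈ (S.filter (fun j => ¬ j ≤ i)).image (fun j => j - i - 1), q ^ (d + 2) :=
      (Finset.sum_image (f := fun d => q ^ (d + 2)) hinj).symm
    rw [himg]
    have hsub : (S.filter (fun j => ¬ j ≤ i)).image (fun j => j - i - 1)
        ⊆ Finset.range (m + 1) := by
      intro d hd
      simp only [Finset.mem_image, Finset.mem_filter, Finset.mem_range, S] at hd ⊢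
      omega
    calc ∑ d ∈ (S.filter (fun j => ¬ j ≤ i)).image (fun j => j - i - 1), q ^ (d + 2)
        ≤ ∑ d ∈ Finset.range (m + 1), q ^ (d + 2) := by
          apply Finset.sum_le_sum_of_subset_of_nonneg hsub
          intro d _ _
          exact pow_nonneg hq0 _
      _ = q * q * ∑ d ∈ Finset.range (m + 1), q ^ d := by
          rw [Finset.mul_sum]
          apply Finset.sum_congr rfl
          intro d _
          ring
      _ ≤ q * q * (1 / (1 - q)) := by
          apply mul_le_mul_of_nonneg_left (geom_aux hq0 hq1 _) (mul_nonneg hq0 hq0)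
  have : q * (1 / (1 - q)) + q * q * (1 / (1 - q)) = q * (1 + q) / (1 - q) := by
    field_simp
  linarith

/-- Given nonnegative weights `w 0, …, w r` summing to `1`, there
is an index `j ≤ m` with `∑_{i=0}^{r} (2/e)^(|i-j|+1) · w i ≤ C/(m+1)`,
where `C = (2/e)·(e+2)/(e-2)`. -/
theorem stmt_13 (m r : ℕ) (w : ℕ → ℝ)
    (hw0 : ∀ i ≤ r, 0 ≤ w i)
    (hw1 : ∑ i ∈ Finset.range (r + 1), w i = 1) :
    ∃ j ≤ m,
      ∑ i ∈ Finset.range (r + 1),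
          (2 / Real.exp 1) ^ (((i : ℤ) - (j : ℤ)).natAbs + 1) * w i ≤
        (2 / Real.exp 1) * (Real.exp 1 + 2) / (Real.exp 1 - 2) / ((m : ℝ) + 1) := by
  set q : ℝ := 2 / Real.exp 1 with hq
  have he : (2.7 : ℝ) < Real.exp 1 := by
    have := Real.exp_one_gt_d9
    linarith
  have hepos : (0 : ℝ) < Real.exp 1 := by linarith
  have hq0 : 0 ≤ q := by positivity
  have hq1 : q < 1 := by
    rw [hq, div_lt_one hepos]
    linarith
  set C : ℝ := q * (1 + q) / (1 - q) with hC
  have hCeq : C = 2 / Real.exp 1 * (Real.exp 1 + 2) / (Real.exp 1 - 2) := by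
    rw [hC, hq]
    have h2 : Real.exp 1 - 2 ≠ 0 := by linarith
    have h0 : Real.exp 1 ≠ 0 := ne_of_gt hepos
    field_simp
  -- total over j of the inner sums is at most C
  have htot : ∑ j ∈ Finset.range (m + 1),
      ∑ i ∈ Finset.range (r + 1), q ^ (((i : ℤ) - (j : ℤ)).natAbs + 1) * w i ≤ C := by
    rw [Finset.sum_comm]
    calc ∑ i ∈ Finset.range (r + 1), ∑ j ∈ Finset.range (m + 1),
            q ^ (((i : ℤ) - (j : ℤ)).natAbs + 1) * w i
        = ∑ i ∈ Finset.range (r + 1),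
            (∑ j ∈ Finset.range (m + 1), q ^ (((i : ℤ) - (j : ℤ)).natAbs + 1)) * w i := by
          apply Finset.sum_congr rfl
          intro i _
          rw [Finset.sum_mul]
      _ ≤ ∑ i ∈ Finset.range (r + 1), C * w i := by
          apply Finset.sum_le_sum
          intro i hi
          simp only [Finset.mem_range] at hi
          have hwi : 0 ≤ w i := hw0 i (by omega)
          exact mul_le_mul_of_nonneg_right (key_aux hq0 hq1 m i) hwi
      _ = C := by rw [← Finset.mul_sum, hw1, mul_one]
  -- averaging
  have hne : (Finset.range (m + 1)).Nonempty := ⟨0, by simp⟩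
  have hconst : ∑ _j ∈ Finset.range (m + 1), C / ((m : ℝ) + 1) = C := by
    rw [Finset.sum_const, Finset.card_range, nsmul_eq_mul]
    have : ((m : ℝ) + 1) ≠ 0 := by positivity
    push_cast
    field_simp
  have hex : ∃ j ∈ Finset.range (m + 1),
      ∑ i ∈ Finset.range (r + 1), q ^ (((i : ℤ) - (j : ℤ)).natAbs + 1) * w i ≤
        C / ((m : ℝ) + 1) := by
    apply Finset.exists_le_of_sum_le hne
    rw [hconst]
    exact htot
  obtain ⟨j, hj, hle⟩ := hex
  simp only [Finset.mem_range] at hj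
  refine ⟨j, by omega, ?_⟩
  rw [← hCeq]
  exact hle
end
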